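/- For n ≥ 5, the number of distinct leverage centrality values among the vertices of ×_m P_n is at most C(m+2, 2) (the (m+1)-st triangle number). -/

import Mathlib

open SimpleGraph Finset

/-- Degree of a vertex (classical decidability so arbitrary graphs work). -/
noncomputable def deg {V : Type*} [Fintype V] (G : SimpleGraph V) (v : V) : ℕ :=
  letI : DecidableRel G.Adj := Classical.decRel _
  G.degree v

/-- Neighbor finset of a vertex. -/
noncomputable def nbrs {V : Type*} [Fintype V] (G : SimpleGraph V) (v : V) : Finset V :=
  letI : DecidableRel G.Adj := Classical.decRel _
  G.neighborFinset v

/-- Leverage centrality of a vertex. -/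
noncomputable def lev {V : Type*} [Fintype V] (G : SimpleGraph V) (v : V) : ℚ :=
  (1 / (deg G v : ℚ)) *
    ∑ u ∈ nbrs G v, ((deg G v : ℚ) - (deg G u : ℚ)) / ((deg G v : ℚ) + (deg G u : ℚ))

/-- The lattice `×_m P_n`: Cartesian product of `m` paths on `n` vertices.
Vertices are `m`-tuples of coordinates in `Fin n`; two vertices are adjacent
iff they differ in exactly one coordinate, by exactly 1. -/
def lattice (m n : ℕ) : SimpleGraph (Fin m → Fin n) where
  Adj v w := ∃ i, ((v i : ℕ) + 1 = (w i : ℕ) ∨ (w i : ℕ) + 1 = (v i : ℕ)) ∧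
    ∀ j, j ≠ i → v j = w j
  symm := by
    constructor
    rintro v w ⟨i, h, hj⟩
    exact ⟨i, h.symm, fun j hne => (hj j hne).symm⟩
  loopless := by
    constructor
    rintro v ⟨i, h, -⟩
    omega

-- ## auxiliary development

lemma mem_nbrs {V : Type*} [Fintype V] (G : SimpleGraph V) (v u : V) :
    u ∈ nbrs G v ↔ G.Adj v u := by
  classical
  unfold nbrs
  exact SimpleGraph.mem_neighborFinset G v u

lemma deg_eq_card {V : Type*} [Fintype V] (G : SimpleGraph V) (v : V) :
    deg G v = (nbrs G v).card := rfl

/-- weight of a path coordinate value: its degree in the path -/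
def wt (n x : ℕ) : ℕ := if x = 0 ∨ x = n - 1 then 1 else 2

variable {m n : ℕ}

/-- neighbors of `v` obtained by changing coordinate `i` -/
def nbrAt (v : Fin m → Fin n) (i : Fin m) : Finset (Fin m → Fin n) :=
  univ.filter fun u => ((v i : ℕ) + 1 = (u i : ℕ) ∨ (u i : ℕ) + 1 = (v i : ℕ)) ∧
    ∀ j, j ≠ i → v j = u j

/-- the possible new values of coordinate `i` -/
def S (v : Fin m → Fin n) (i : Fin m) : Finset (Fin n) :=
  univ.filter fun k => ((v i : ℕ) + 1 = (k : ℕ) ∨ (k : ℕ) + 1 = (v i : ℕ))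

lemma nbrs_eq (v : Fin m → Fin n) :
    nbrs (lattice m n) v = univ.biUnion (nbrAt v) := by
  ext u
  simp only [mem_nbrs, lattice, nbrAt, mem_biUnion, mem_univ, true_and, mem_filter]

lemma nbrAt_disj (v : Fin m → Fin n) :
    Set.PairwiseDisjoint (↑(univ : Finset (Fin m))) (nbrAt v) := by
  intro i _ j _ hij
  refine Finset.disjoint_left.2 fun u hi hj => ?_
  simp only [nbrAt, mem_filter, mem_univ, true_and] at hi hj
  have := hj.2 i hij
  have h1 := hi.1
  rw [← this] at h1
  omega

lemma update_inj (v : Fin m → Fin n) (i : Fin m) :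
    Function.Injective (Function.update v i) := by
  intro a b h
  have := congrFun h i
  simpa using this

lemma nbrAt_eq (v : Fin m → Fin n) (i : Fin m) :
    nbrAt v i = (S v i).image (Function.update v i) := by
  ext u
  simp only [nbrAt, S, mem_filter, mem_univ, true_and, mem_image]
  constructor
  · rintro ⟨h1, h2⟩
    refine ⟨u i, h1, ?_⟩
    funext j
    by_cases hj : j = i
    · subst hj; simp
    · rw [Function.update_of_ne hj, h2 j hj]
  · rintro ⟨k, hk, rfl⟩
    refine ⟨by simpa using hk, fun j hj => by rw [Function.update_of_ne hj]⟩

lemma sum_nbrs (v : Fin m → Fin n) (f : (Fin m → Fin n) → ℚ) :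
    ∑ u ∈ nbrs (lattice m n) v, f u
      = ∑ i, ∑ k ∈ S v i, f (Function.update v i k) := by
  rw [nbrs_eq, Finset.sum_biUnion (nbrAt_disj v)]
  refine Finset.sum_congr rfl fun i _ => ?_
  rw [nbrAt_eq, Finset.sum_image (fun a _ b _ h => update_inj v i h)]

-- explicit description of S
lemma S_eq_bot (hn : 5 ≤ n) (v : Fin m → Fin n) (i : Fin m) (h : (v i : ℕ) = 0) :
    S v i = {(⟨1, by omega⟩ : Fin n)} := by
  ext k
  simp only [S, mem_filter, mem_univ, true_and, mem_singleton, Fin.ext_iff]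
  omega

lemma S_eq_top (hn : 5 ≤ n) (v : Fin m → Fin n) (i : Fin m) (h : (v i : ℕ) = n - 1) :
    S v i = {(⟨n - 2, by omega⟩ : Fin n)} := by
  have := (v i).isLt
  ext k
  have := k.isLt
  simp only [S, mem_filter, mem_univ, true_and, mem_singleton, Fin.ext_iff]
  omega

lemma S_eq_mid (hn : 5 ≤ n) (v : Fin m → Fin n) (i : Fin m)
    (h0 : (v i : ℕ) ≠ 0) (h1 : (v i : ℕ) ≠ n - 1) :
    S v i = {(⟨(v i : ℕ) - 1, by omega⟩ : Fin n),
             (⟨(v i : ℕ) + 1, by have := (v i).isLt; omega⟩ : Fin n)} := by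
  have := (v i).isLt
  ext k
  simp only [S, mem_filter, mem_univ, true_and, mem_insert, mem_singleton, Fin.ext_iff]
  omega

lemma card_S (hn : 5 ≤ n) (v : Fin m → Fin n) (i : Fin m) :
    (S v i).card = wt n (v i : ℕ) := by
  unfold wt
  by_cases h0 : (v i : ℕ) = 0
  · rw [S_eq_bot hn v i h0]; simp [h0]
  · by_cases h1 : (v i : ℕ) = n - 1
    · rw [S_eq_top hn v i h1]; simp [h1]
    · rw [S_eq_mid hn v i h0 h1]
      rw [Finset.card_insert_of_notMem, Finset.card_singleton]
      · simp [h0, h1]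
      · simp only [mem_singleton, Fin.ext_iff]
        omega

lemma deg_lattice (hn : 5 ≤ n) (v : Fin m → Fin n) :
    deg (lattice m n) v = ∑ i, wt n (v i : ℕ) := by
  rw [deg_eq_card, nbrs_eq, Finset.card_biUnion (nbrAt_disj v)]
  refine Finset.sum_congr rfl fun i _ => ?_
  rw [nbrAt_eq, Finset.card_image_of_injective _ (update_inj v i), card_S hn]

lemma deg_update (hn : 5 ≤ n) (v : Fin m → Fin n) (i : Fin m) (k : Fin n) :
    deg (lattice m n) (Function.update v i k) + wt n (v i : ℕ)
      = deg (lattice m n) v + wt n (k : ℕ) := by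
  rw [deg_lattice hn, deg_lattice hn]
  have h1 : ∑ j, wt n ((Function.update v i k) j : ℕ)
      = wt n (k : ℕ) + ∑ j ∈ univ.erase i, wt n (v j : ℕ) := by
    rw [← Finset.add_sum_erase _ _ (mem_univ i)]
    congr 1
    · simp
    · refine Finset.sum_congr rfl fun j hj => ?_
      rw [Function.update_of_ne (Finset.mem_erase.1 hj).1]
  have h2 : ∑ j, wt n (v j : ℕ) = wt n (v i : ℕ) + ∑ j ∈ univ.erase i, wt n (v j : ℕ) :=
    (Finset.add_sum_erase _ _ (mem_univ i)).symm
  omega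

lemma wt_one {x : ℕ} (h : x = 0 ∨ x = n - 1) : wt n x = 1 := if_pos h

lemma wt_two {x : ℕ} (h0 : x ≠ 0) (h1 : x ≠ n - 1) : wt n x = 2 := if_neg (by tauto)

lemma frac_plus (d : ℚ) (hd : 0 ≤ d) : (d - (d + 1)) / (d + (d + 1)) = -1 / (2 * d + 1) := by
  rw [div_eq_div_iff (by intro h; linarith) (by intro h; linarith)]
  ring

lemma frac_minus (d : ℚ) (hd : 1 ≤ d) : (d - (d - 1)) / (d + (d - 1)) = 1 / (2 * d - 1) := by
  rw [div_eq_div_iff (by intro h; linarith) (by intro h; linarith)]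
  ring

lemma frac_self (d : ℚ) : (d - d) / (d + d) = 0 := by simp

lemma deg_pos (hn : 5 ≤ n) (v : Fin m → Fin n) (i : Fin m) :
    1 ≤ deg (lattice m n) v := by
  rw [deg_lattice hn]
  calc 1 ≤ wt n (v i : ℕ) := by unfold wt; split <;> omega
    _ ≤ ∑ j, wt n (v j : ℕ) :=
        Finset.single_le_sum (f := fun j => wt n (v j : ℕ))
          (fun _ _ => Nat.zero_le _) (mem_univ i)

lemma coord_sum (hn : 5 ≤ n) (v : Fin m → Fin n) (i : Fin m) :
    ∑ k ∈ S v i,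
        (((deg (lattice m n) v : ℚ) - (deg (lattice m n) (Function.update v i k) : ℚ)) /
          ((deg (lattice m n) v : ℚ) + (deg (lattice m n) (Function.update v i k) : ℚ)))
      = if (v i : ℕ) = 0 ∨ (v i : ℕ) = n - 1 then
          -1 / (2 * (deg (lattice m n) v : ℚ) + 1)
        else if (v i : ℕ) = 1 ∨ (v i : ℕ) = n - 2 then
          1 / (2 * (deg (lattice m n) v : ℚ) - 1)
        else 0 := by
  have hx : (v i : ℕ) < n := (v i).isLt
  have key : ∀ k : Fin n, (deg (lattice m n) (Function.update v i k) : ℚ)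
      = (deg (lattice m n) v : ℚ) + (wt n (k : ℕ) : ℚ) - (wt n (v i : ℕ) : ℚ) := by
    intro k
    have h := deg_update hn v i k
    have h2 : (deg (lattice m n) (Function.update v i k) : ℚ) + (wt n (v i : ℕ) : ℚ)
        = (deg (lattice m n) v : ℚ) + (wt n (k : ℕ) : ℚ) := by exact_mod_cast h
    linarith
  have hd0 : (0:ℚ) ≤ (deg (lattice m n) v : ℚ) := Nat.cast_nonneg _
  have hd1 : (1:ℚ) ≤ (deg (lattice m n) v : ℚ) := by
    exact_mod_cast deg_pos hn v i
  by_cases h0 : (v i : ℕ) = 0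
  · rw [S_eq_bot hn v i h0, Finset.sum_singleton]
    have he : (deg (lattice m n) (Function.update v i ⟨1, by omega⟩) : ℚ)
        = (deg (lattice m n) v : ℚ) + 1 := by
      rw [key, show (((⟨1, by omega⟩ : Fin n)) : ℕ) = 1 from rfl, h0,
        wt_one (n := n) (Or.inl rfl), wt_two (n := n) one_ne_zero (by omega)]
      push_cast; ring
    rw [he, frac_plus _ hd0, if_pos (Or.inl h0)]
  · by_cases h1 : (v i : ℕ) = n - 1
    · rw [S_eq_top hn v i h1, Finset.sum_singleton]
      have he : (deg (lattice m n) (Function.update v i ⟨n - 2, by omega⟩) : ℚ)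
          = (deg (lattice m n) v : ℚ) + 1 := by
        rw [key, show (((⟨n - 2, by omega⟩ : Fin n)) : ℕ) = n - 2 from rfl, h1,
          wt_one (n := n) (Or.inr rfl), wt_two (n := n) (by omega) (by omega)]
        push_cast; ring
      rw [he, frac_plus _ hd0, if_pos (Or.inr h1)]
    · -- middle cases: S = {x-1, x+1}
      rw [S_eq_mid hn v i h0 h1]
      have hne : (⟨(v i : ℕ) - 1, by omega⟩ : Fin n)
          ≠ (⟨(v i : ℕ) + 1, by omega⟩ : Fin n) := by
        simp only [ne_eq, Fin.mk.injEq]; omega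
      rw [Finset.sum_insert (by simp only [Finset.mem_singleton]; exact hne), Finset.sum_singleton]
      have hwx : wt n (v i : ℕ) = 2 := wt_two (n := n) h0 h1
      rw [if_neg (by tauto)]
      by_cases h2 : (v i : ℕ) = 1
      · -- down to 0 (boundary), up to 2 (interior)
        have hea : (deg (lattice m n) (Function.update v i ⟨(v i : ℕ) - 1, by omega⟩) : ℚ)
            = (deg (lattice m n) v : ℚ) - 1 := by
          rw [key, show (((⟨(v i : ℕ) - 1, by omega⟩ : Fin n)) : ℕ) = (v i : ℕ) - 1 from rfl,
            hwx, wt_one (n := n) (x := (v i : ℕ) - 1) (Or.inl (by omega))]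
          push_cast; ring
        have heb : (deg (lattice m n) (Function.update v i ⟨(v i : ℕ) + 1, by omega⟩) : ℚ)
            = (deg (lattice m n) v : ℚ) := by
          rw [key, show (((⟨(v i : ℕ) + 1, by omega⟩ : Fin n)) : ℕ) = (v i : ℕ) + 1 from rfl,
            hwx, wt_two (n := n) (x := (v i : ℕ) + 1) (by omega) (by omega)]
          push_cast; ring
        rw [hea, heb, frac_minus _ hd1, frac_self, if_pos (Or.inl h2), add_zero]
      · by_cases h3 : (v i : ℕ) = n - 2
        · -- down to n-3 (interior), up to n-1 (boundary)
          have hea : (deg (lattice m n) (Function.update v i ⟨(v i : ℕ) - 1, by omega⟩) : ℚ)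
              = (deg (lattice m n) v : ℚ) := by
            rw [key, show (((⟨(v i : ℕ) - 1, by omega⟩ : Fin n)) : ℕ) = (v i : ℕ) - 1 from rfl,
              hwx, wt_two (n := n) (x := (v i : ℕ) - 1) (by omega) (by omega)]
            push_cast; ring
          have heb : (deg (lattice m n) (Function.update v i ⟨(v i : ℕ) + 1, by omega⟩) : ℚ)
              = (deg (lattice m n) v : ℚ) - 1 := by
            rw [key, show (((⟨(v i : ℕ) + 1, by omega⟩ : Fin n)) : ℕ) = (v i : ℕ) + 1 from rfl,
              hwx, wt_one (n := n) (x := (v i : ℕ) + 1) (Or.inr (by omega))]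
            push_cast; ring
          rw [hea, heb, frac_minus _ hd1, frac_self, if_pos (Or.inr h3), zero_add]
        · -- interior
          have hea : (deg (lattice m n) (Function.update v i ⟨(v i : ℕ) - 1, by omega⟩) : ℚ)
              = (deg (lattice m n) v : ℚ) := by
            rw [key, show (((⟨(v i : ℕ) - 1, by omega⟩ : Fin n)) : ℕ) = (v i : ℕ) - 1 from rfl,
              hwx, wt_two (n := n) (x := (v i : ℕ) - 1) (by omega) (by omega)]
            push_cast; ring
          have heb : (deg (lattice m n) (Function.update v i ⟨(v i : ℕ) + 1, by omega⟩) : ℚ)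
              = (deg (lattice m n) v : ℚ) := by
            rw [key, show (((⟨(v i : ℕ) + 1, by omega⟩ : Fin n)) : ℕ) = (v i : ℕ) + 1 from rfl,
              hwx, wt_two (n := n) (x := (v i : ℕ) + 1) (by omega) (by omega)]
            push_cast; ring
          rw [hea, heb, frac_self, if_neg (by tauto), add_zero]

/-- number of boundary coordinates -/
def bC (v : Fin m → Fin n) : ℕ :=
  (univ.filter fun i => (v i : ℕ) = 0 ∨ (v i : ℕ) = n - 1).card

/-- number of near-boundary coordinates -/
def cC (v : Fin m → Fin n) : ℕ :=
  (univ.filter fun i => (v i : ℕ) = 1 ∨ (v i : ℕ) = n - 2).card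

lemma deg_add_b (hn : 5 ≤ n) (v : Fin m → Fin n) :
    deg (lattice m n) v + bC v = 2 * m := by
  rw [deg_lattice hn, bC, Finset.card_filter, ← Finset.sum_add_distrib]
  have h : ∀ i : Fin m,
      wt n (v i : ℕ) + (if (v i : ℕ) = 0 ∨ (v i : ℕ) = n - 1 then 1 else 0) = 2 := by
    intro i; unfold wt; split <;> simp_all
  rw [Finset.sum_congr rfl (fun i _ => h i), Finset.sum_const, card_univ,
    Fintype.card_fin, smul_eq_mul]
  ring

/-- the leverage value as a function of the pair (b, c) -/
def L (m : ℕ) (p : ℕ × ℕ) : ℚ :=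
  (1 / (2 * (m : ℚ) - (p.1 : ℚ))) *
    ((p.1 : ℚ) * (-1 / (2 * (2 * (m : ℚ) - (p.1 : ℚ)) + 1)) +
     (p.2 : ℚ) * (1 / (2 * (2 * (m : ℚ) - (p.1 : ℚ)) - 1)))

lemma lev_eq (hn : 5 ≤ n) (v : Fin m → Fin n) :
    lev (lattice m n) v = L m (bC v, cC v) := by
  have hdq : (deg (lattice m n) v : ℚ) = 2 * (m : ℚ) - (bC v : ℚ) := by
    have h := deg_add_b hn v
    have h2 : (deg (lattice m n) v : ℚ) + (bC v : ℚ) = 2 * (m : ℚ) := by exact_mod_cast h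
    linarith
  unfold lev
  rw [sum_nbrs, Finset.sum_congr rfl (fun i _ => coord_sum hn v i)]
  have hsum : ∑ i : Fin m,
      (if (v i : ℕ) = 0 ∨ (v i : ℕ) = n - 1 then
          -1 / (2 * (deg (lattice m n) v : ℚ) + 1)
        else if (v i : ℕ) = 1 ∨ (v i : ℕ) = n - 2 then
          1 / (2 * (deg (lattice m n) v : ℚ) - 1)
        else 0)
      = (bC v : ℚ) * (-1 / (2 * (deg (lattice m n) v : ℚ) + 1)) +
        (cC v : ℚ) * (1 / (2 * (deg (lattice m n) v : ℚ) - 1)) := by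
    rw [Finset.sum_ite, Finset.sum_const, Finset.sum_ite, Finset.sum_const,
      Finset.sum_const_zero, add_zero, Finset.filter_filter]
    have hfe : (univ.filter fun i =>
        ¬((v i : ℕ) = 0 ∨ (v i : ℕ) = n - 1) ∧ ((v i : ℕ) = 1 ∨ (v i : ℕ) = n - 2))
        = (univ.filter fun i => (v i : ℕ) = 1 ∨ (v i : ℕ) = n - 2) := by
      refine Finset.filter_congr fun i _ => ?_
      constructor
      · exact fun h => h.2
      · intro h; exact ⟨by omega, h⟩
    rw [hfe]
    unfold bC cC
    push_cast [nsmul_eq_mul]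
    ring
  rw [hsum, hdq]
  unfold L
  norm_num

lemma bc_le (hn : 5 ≤ n) (v : Fin m → Fin n) : bC v + cC v ≤ m := by
  unfold bC cC
  rw [← Finset.card_union_of_disjoint]
  · calc _ ≤ (univ : Finset (Fin m)).card := Finset.card_le_card (Finset.subset_univ _)
      _ = m := by simp
  · refine Finset.disjoint_left.2 fun i h1 h2 => ?_
    simp only [mem_filter, mem_univ, true_and] at h1 h2
    omega

lemma card_T : ((Finset.range (m + 1)).biUnion fun s => Finset.HasAntidiagonal.antidiagonal s).card
    = (m + 2).choose 2 := by
  rw [Finset.card_biUnion]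
  · have h1 : ∑ s ∈ Finset.range (m + 1), (Finset.HasAntidiagonal.antidiagonal s).card
        = ∑ s ∈ Finset.range (m + 1), (s + 1) := by
      refine Finset.sum_congr rfl fun s _ => ?_
      exact Finset.Nat.card_antidiagonal s
    rw [h1]
    have h2 : ∑ s ∈ Finset.range (m + 2), s = (∑ s ∈ Finset.range (m + 1), (s + 1)) + 0 :=
      Finset.sum_range_succ' id (m + 1)
    have h3 := Finset.sum_range_id_mul_two (m + 2)
    rw [Nat.choose_two_right]
    omega
  · intro i _ j _ hij
    refine Finset.disjoint_left.2 fun p hp1 hp2 => ?_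
    rw [Finset.HasAntidiagonal.mem_antidiagonal] at hp1 hp2
    omega

theorem lattice_distinct_leverage_bound (m n : ℕ) (hn : 5 ≤ n) :
    ((Finset.univ : Finset (Fin m → Fin n)).image (lev (lattice m n))).card ≤
      (m + 2).choose 2 := by
  have h1 : (Finset.univ : Finset (Fin m → Fin n)).image (lev (lattice m n))
      = (Finset.univ.image (fun v : Fin m → Fin n => (bC v, cC v))).image (L m) := by
    rw [Finset.image_image]
    exact Finset.image_congr fun v _ => lev_eq hn v
  rw [h1]
  calc ((Finset.univ.image (fun v : Fin m → Fin n => (bC v, cC v))).image (L m)).card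
      ≤ (Finset.univ.image (fun v : Fin m → Fin n => (bC v, cC v))).card :=
        Finset.card_image_le
    _ ≤ ((Finset.range (m + 1)).biUnion fun s => Finset.HasAntidiagonal.antidiagonal s).card := by
        refine Finset.card_le_card ?_
        intro p hp
        simp only [Finset.mem_image, Finset.mem_univ, true_and] at hp
        obtain ⟨v, rfl⟩ := hp
        rw [Finset.mem_biUnion]
        exact ⟨bC v + cC v, Finset.mem_range.2 (by have := bc_le hn v; omega),
          Finset.HasAntidiagonal.mem_antidiagonal.2 rfl⟩
    _ = (m + 2).choose 2 := card_T
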